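/- Let b : ℝ → ℝ be locally integrable, let I = (x₀ − r, x₀ + r) be a bounded interval, let α be a median of b on I, let 1 < p < ∞, and let I₁ := {x ∈ I : b(x) > α}, I₂ := {x ∈ I : b(x) < α}, a := (|I₁| − |I₂|)/|I|, and f := |I|^{−1/p}(χ_{I₁} − χ_{I₂} − a χ_I). Then: (i) ∫_ℝ f = 0; (ii) |a| ≤ 1/2; (iii) supp f ⊆ I; (iv) f(y)(b(y) − α) ≥ 0 for all y ∈ I; (v) (1/2)|I|^{−1/p} ≤ |f(y)| ≤ (5/2)|I|^{−1/p} for all y ∈ I₁ ∪ I₂; and (vi) ‖f‖_{L^p(ℝ)} ≤ 5/2. -/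

import Mathlib

open MeasureTheory Filter Set
open scoped ENNReal

/-- `α` is a median of `b` on the bounded interval `I`. -/
def IsMedian (b : ℝ → ℝ) (I : Set ℝ) (α : ℝ) : Prop :=
  volume {x | x ∈ I ∧ α < b x} ≤ volume I / 2 ∧
  volume {x | x ∈ I ∧ b x < α} ≤ volume I / 2

/-- Properties of the test function `f = |I|^{-1/p}(χ_{I₁} - χ_{I₂} - a χ_I)` built from a
median `α` of `b` on `I`. -/
theorem median_test_function_properties
    (b : ℝ → ℝ) (hb : MeasureTheory.LocallyIntegrable b volume)
    (x₀ r : ℝ) (hr : 0 < r)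
    (I : Set ℝ) (hI : I = Set.Ioo (x₀ - r) (x₀ + r))
    (α : ℝ) (hα : IsMedian b I α)
    (p : ℝ) (hp : 1 < p)
    (I₁ I₂ : Set ℝ) (a : ℝ) (f : ℝ → ℝ)
    (hI₁ : I₁ = {x | x ∈ I ∧ α < b x})
    (hI₂ : I₂ = {x | x ∈ I ∧ b x < α})
    (ha : a = ((volume I₁).toReal - (volume I₂).toReal) / (2 * r))
    (hf : f = fun y => (2 * r) ^ (-1 / p) *
        (Set.indicator I₁ (fun _ => (1 : ℝ)) y - Set.indicator I₂ (fun _ => (1 : ℝ)) y -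
          a * Set.indicator I (fun _ => (1 : ℝ)) y)) :
    (∫ y : ℝ, f y) = 0 ∧
    |a| ≤ 1 / 2 ∧
    Function.support f ⊆ I ∧
    (∀ y ∈ I, 0 ≤ f y * (b y - α)) ∧
    (∀ y ∈ I₁ ∪ I₂,
      (2 * r) ^ (-1 / p) / 2 ≤ |f y| ∧ |f y| ≤ 5 / 2 * (2 * r) ^ (-1 / p)) ∧
    eLpNorm f (ENNReal.ofReal p) volume ≤ ENNReal.ofReal (5 / 2) := by
  classical
  obtain ⟨hα₁, hα₂⟩ := hα
  have hr2 : (0:ℝ) < 2 * r := by linarith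
  have hcpos : 0 < (2 * r) ^ (-1 / p) := Real.rpow_pos_of_pos hr2 _
  have hvolI : volume I = ENNReal.ofReal (2 * r) := by
    rw [hI, Real.volume_Ioo]
    ring_nf
  have hvolIlt : volume I < ⊤ := by rw [hvolI]; exact ENNReal.ofReal_lt_top
  have hI1sub : I₁ ⊆ I := by rw [hI₁]; exact fun x hx => hx.1
  have hI2sub : I₂ ⊆ I := by rw [hI₂]; exact fun x hx => hx.1
  have hv1lt : volume I₁ < ⊤ := lt_of_le_of_lt (measure_mono hI1sub) hvolIlt
  have hv2lt : volume I₂ < ⊤ := lt_of_le_of_lt (measure_mono hI2sub) hvolIlt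
  -- measure bounds from the median property
  have hm1 : (volume I₁).toReal ≤ r := by
    rw [hI₁]
    have h2 : volume I / 2 = ENNReal.ofReal r := by
      rw [hvolI, ← ENNReal.ofReal_ofNat, ← ENNReal.ofReal_div_of_pos (by norm_num)]
      congr 1; ring
    rw [h2] at hα₁
    calc (volume {x | x ∈ I ∧ α < b x}).toReal ≤ (ENNReal.ofReal r).toReal :=
          ENNReal.toReal_mono ENNReal.ofReal_ne_top hα₁
      _ = r := ENNReal.toReal_ofReal hr.le
  have hm2 : (volume I₂).toReal ≤ r := by
    rw [hI₂]
    have h2 : volume I / 2 = ENNReal.ofReal r := by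
      rw [hvolI, ← ENNReal.ofReal_ofNat, ← ENNReal.ofReal_div_of_pos (by norm_num)]
      congr 1; ring
    rw [h2] at hα₂
    calc (volume {x | x ∈ I ∧ b x < α}).toReal ≤ (ENNReal.ofReal r).toReal :=
          ENNReal.toReal_mono ENNReal.ofReal_ne_top hα₂
      _ = r := ENNReal.toReal_ofReal hr.le
  have hm1' : 0 ≤ (volume I₁).toReal := ENNReal.toReal_nonneg
  have hm2' : 0 ≤ (volume I₂).toReal := ENNReal.toReal_nonneg
  have habs : |a| ≤ 1 / 2 := by
    rw [ha, abs_div, abs_of_pos hr2, div_le_iff₀ hr2, abs_sub_le_iff]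
    constructor <;> linarith
  have ha' : -(1/2) ≤ a ∧ a ≤ 1/2 := abs_le.mp habs
  -- measurable versions of I₁ and I₂
  have hbm := hb.aestronglyMeasurable
  have hbb' : b =ᵐ[volume] hbm.mk b := hbm.ae_eq_mk
  have hb'm : Measurable (hbm.mk b) := hbm.stronglyMeasurable_mk.measurable
  have hImeas : MeasurableSet I := by rw [hI]; exact measurableSet_Ioo
  set J₁ : Set ℝ := I ∩ (hbm.mk b) ⁻¹' Set.Ioi α with hJ₁
  set J₂ : Set ℝ := I ∩ (hbm.mk b) ⁻¹' Set.Iio α with hJ₂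
  have hJ₁m : MeasurableSet J₁ := hImeas.inter (hb'm measurableSet_Ioi)
  have hJ₂m : MeasurableSet J₂ := hImeas.inter (hb'm measurableSet_Iio)
  have hIJ₁ : I₁ =ᵐ[volume] J₁ := by
    rw [Filter.eventuallyEq_set]
    filter_upwards [hbb'] with x hx
    simp [hI₁, hJ₁, Set.mem_setOf_eq, hx]
  have hIJ₂ : I₂ =ᵐ[volume] J₂ := by
    rw [Filter.eventuallyEq_set]
    filter_upwards [hbb'] with x hx
    simp [hI₂, hJ₂, Set.mem_setOf_eq, hx]
  have hind₁ : Set.indicator I₁ (fun _ => (1:ℝ)) =ᵐ[volume] Set.indicator J₁ (fun _ => (1:ℝ)) := by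
    filter_upwards [hIJ₁] with x hx
    simp only [Set.indicator_apply, show (x ∈ I₁) = (x ∈ J₁) from hx]
  have hind₂ : Set.indicator I₂ (fun _ => (1:ℝ)) =ᵐ[volume] Set.indicator J₂ (fun _ => (1:ℝ)) := by
    filter_upwards [hIJ₂] with x hx
    simp only [Set.indicator_apply, show (x ∈ I₂) = (x ∈ J₂) from hx]
  have hvJ₁ : volume J₁ = volume I₁ := (measure_congr hIJ₁).symm
  have hvJ₂ : volume J₂ = volume I₂ := (measure_congr hIJ₂).symm
  have hintJ₁ : Integrable (Set.indicator J₁ (fun _ => (1:ℝ))) volume := by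
    rw [integrable_indicator_iff hJ₁m]
    exact integrableOn_const (by rw [hvJ₁]; exact hv1lt.ne)
  have hintJ₂ : Integrable (Set.indicator J₂ (fun _ => (1:ℝ))) volume := by
    rw [integrable_indicator_iff hJ₂m]
    exact integrableOn_const (by rw [hvJ₂]; exact hv2lt.ne)
  have hint₁ : Integrable (Set.indicator I₁ (fun _ => (1:ℝ))) volume :=
    hintJ₁.congr hind₁.symm
  have hint₂ : Integrable (Set.indicator I₂ (fun _ => (1:ℝ))) volume :=
    hintJ₂.congr hind₂.symm
  have hintI : Integrable (Set.indicator I (fun _ => (1:ℝ))) volume := by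
    rw [integrable_indicator_iff hImeas]
    exact integrableOn_const hvolIlt.ne
  have hI₁int : ∫ y, Set.indicator I₁ (fun _ => (1:ℝ)) y = (volume I₁).toReal := by
    rw [integral_congr_ae hind₁]
    have : ∀ y, Set.indicator J₁ (fun _ => (1:ℝ)) y = Set.indicator J₁ (1 : ℝ → ℝ) y := by
      intro y; rfl
    simp only [this]
    rw [integral_indicator_one hJ₁m, measureReal_def, hvJ₁]
  have hI₂int : ∫ y, Set.indicator I₂ (fun _ => (1:ℝ)) y = (volume I₂).toReal := by
    rw [integral_congr_ae hind₂]
    have : ∀ y, Set.indicator J₂ (fun _ => (1:ℝ)) y = Set.indicator J₂ (1 : ℝ → ℝ) y := by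
      intro y; rfl
    simp only [this]
    rw [integral_indicator_one hJ₂m, measureReal_def, hvJ₂]
  have hIint : ∫ y, Set.indicator I (fun _ => (1:ℝ)) y = 2 * r := by
    have : ∀ y, Set.indicator I (fun _ => (1:ℝ)) y = Set.indicator I (1 : ℝ → ℝ) y := by
      intro y; rfl
    simp only [this]
    rw [integral_indicator_one hImeas, measureReal_def, hvolI, ENNReal.toReal_ofReal hr2.le]
  refine ⟨?_, habs, ?_, ?_, ?_, ?_⟩
  · -- integral is zero
    rw [hf]
    rw [integral_const_mul]
    have hsub : Integrable (fun y => Set.indicator I₁ (fun _ => (1:ℝ)) y -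
        Set.indicator I₂ (fun _ => (1:ℝ)) y) volume := hint₁.sub hint₂
    have hconst : Integrable (fun y => a * Set.indicator I (fun _ => (1:ℝ)) y) volume :=
      hintI.const_mul a
    rw [integral_sub hsub hconst, integral_sub hint₁ hint₂,
      integral_const_mul, hI₁int, hI₂int, hIint, ha]
    field_simp
    ring
  · -- support ⊆ I
    intro y hy
    by_contra hyI
    apply hy
    rw [hf]
    simp only
    rw [Set.indicator_of_notMem (fun h => hyI (hI1sub h)),
      Set.indicator_of_notMem (fun h => hyI (hI2sub h)),
      Set.indicator_of_notMem hyI]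
    ring
  · -- sign condition
    intro y hyI
    rcases lt_trichotomy (b y) α with hby | hby | hby
    · have h1 : y ∉ I₁ := by rw [hI₁]; exact fun h => absurd h.2 (not_lt.2 hby.le)
      have h2 : y ∈ I₂ := by rw [hI₂]; exact ⟨hyI, hby⟩
      rw [hf]
      simp only
      rw [Set.indicator_of_notMem h1, Set.indicator_of_mem h2, Set.indicator_of_mem hyI]
      have : (2 * r) ^ (-1 / p) * (0 - 1 - a * 1) * (b y - α)
          = (2 * r) ^ (-1 / p) * ((1 + a) * (α - b y)) := by ring
      rw [this]
      have h1a : 0 ≤ 1 + a := by linarith [ha'.1]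
      exact mul_nonneg hcpos.le (mul_nonneg h1a (by linarith))
    · rw [hby]; simp
    · have h1 : y ∈ I₁ := by rw [hI₁]; exact ⟨hyI, hby⟩
      have h2 : y ∉ I₂ := by rw [hI₂]; exact fun h => absurd h.2 (not_lt.2 hby.le)
      rw [hf]
      simp only
      rw [Set.indicator_of_mem h1, Set.indicator_of_notMem h2, Set.indicator_of_mem hyI]
      have : (2 * r) ^ (-1 / p) * (1 - 0 - a * 1) * (b y - α)
          = (2 * r) ^ (-1 / p) * ((1 - a) * (b y - α)) := by ring
      rw [this]
      have h1a : 0 ≤ 1 - a := by linarith [ha'.2]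
      exact mul_nonneg hcpos.le (mul_nonneg h1a (by linarith))
  · -- size on I₁ ∪ I₂
    intro y hy
    rcases hy with hy1 | hy2
    · have hyI : y ∈ I := hI1sub hy1
      have h2 : y ∉ I₂ := by
        rw [hI₂]; rw [hI₁] at hy1
        exact fun h => absurd h.2 (not_lt.2 hy1.2.le)
      have hfy : f y = (2 * r) ^ (-1 / p) * (1 - a) := by
        rw [hf]
        simp only
        rw [Set.indicator_of_mem hy1, Set.indicator_of_notMem h2, Set.indicator_of_mem hyI]
        ring
      rw [hfy, abs_of_nonneg (by nlinarith [ha'.2])]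
      constructor <;> nlinarith [ha'.1, ha'.2]
    · have hyI : y ∈ I := hI2sub hy2
      have h1 : y ∉ I₁ := by
        rw [hI₁]; rw [hI₂] at hy2
        exact fun h => absurd h.2 (not_lt.2 hy2.2.le)
      have hfy : f y = (2 * r) ^ (-1 / p) * (-1 - a) := by
        rw [hf]
        simp only
        rw [Set.indicator_of_notMem h1, Set.indicator_of_mem hy2, Set.indicator_of_mem hyI]
        ring
      rw [hfy]
      have : |(2 * r) ^ (-1 / p) * (-1 - a)| = (2 * r) ^ (-1 / p) * (1 + a) := by
        rw [abs_of_nonpos (by nlinarith [ha'.1])]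
        ring
      rw [this]
      constructor <;> nlinarith [ha'.1, ha'.2]
  · -- Lp norm bound
    set g : ℝ → ℝ := Set.indicator I (fun _ => 5 / 2 * (2 * r) ^ (-1 / p)) with hg
    have hbound : ∀ x, ‖f x‖ ≤ ‖g x‖ := by
      intro x
      by_cases hxI : x ∈ I
      · rw [hg]
        simp only [Set.indicator_of_mem hxI]
        rw [hf]
        simp only
        rw [Real.norm_eq_abs, Real.norm_eq_abs, abs_mul,
          abs_of_pos hcpos, abs_of_pos (by positivity : (0:ℝ) < 5 / 2 * (2 * r) ^ (-1 / p))]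
        rw [mul_comm (5/2 : ℝ)]
        rw [mul_le_mul_iff_right₀ hcpos]
        have i1 : Set.indicator I₁ (fun _ => (1:ℝ)) x = 0 ∨
            Set.indicator I₁ (fun _ => (1:ℝ)) x = 1 := Set.indicator_eq_zero_or_self _ _ _
        have i2 : Set.indicator I₂ (fun _ => (1:ℝ)) x = 0 ∨
            Set.indicator I₂ (fun _ => (1:ℝ)) x = 1 := Set.indicator_eq_zero_or_self _ _ _
        rw [Set.indicator_of_mem hxI]
        rcases i1 with h1 | h1 <;> rcases i2 with h2 | h2 <;> rw [h1, h2] <;>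
          rw [abs_le] <;> constructor <;> linarith [ha'.1, ha'.2]
      · rw [hf, hg]
        simp only
        rw [Set.indicator_of_notMem (fun h => hxI (hI1sub h)),
          Set.indicator_of_notMem (fun h => hxI (hI2sub h)),
          Set.indicator_of_notMem hxI, Set.indicator_of_notMem hxI]
        simp
    calc eLpNorm f (ENNReal.ofReal p) volume ≤ eLpNorm g (ENNReal.ofReal p) volume :=
          eLpNorm_mono hbound
      _ ≤ ENNReal.ofReal (5 / 2) := by
          rw [hg, eLpNorm_indicator_const hImeas
            (by simp [ENNReal.ofReal_eq_zero]; linarith) ENNReal.ofReal_ne_top]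
          rw [ENNReal.toReal_ofReal (by linarith : (0:ℝ) ≤ p)]
          rw [hvolI, ENNReal.ofReal_rpow_of_pos hr2]
          rw [Real.enorm_eq_ofReal (by positivity)]
          rw [← ENNReal.ofReal_mul (by positivity)]
          apply le_of_eq
          congr 1
          rw [mul_assoc, ← Real.rpow_add hr2,
            show (-1 / p + 1 / p : ℝ) = 0 by ring, Real.rpow_zero, mul_one]
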